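/- arXiv:0911.3370 — 2 statements merged into one kernel-verified Lean document; each statement's English description precedes it below -/
import Mathlib

section
/- Let μ > p, p ∈ ℤ⁺, μ non-integer, m = ⌈μ⌉, ν = m - μ, f defined on ℕ_a, a ∈ ℤ⁺, with Δ^k f(a) = 0 for k = p, ..., m-1. Let γ, δ > 1 with 1/γ + 1/δ = 1, r ≥ 1, and b ≥ a+m-p. Then (∑_{j=a+m-p}^{b} |Δ^p f(j)|^r)^{1/r} ≤ (1/Γ(μ-p))·[∑_{j=a+m-p}^{b} (∑_{s=a+ν}^{j-μ+p} ((j-s-1)^(μ-p-1))^γ)^{r/γ}]^{1/r}·(∑_{s=a+ν}^{b-μ+p} |Δ_*^μ f(s)|^δ)^{1/δ}. -/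
open Finset

/-- Generalized falling factorial `t^(α) = Γ(t+1)/Γ(t-α+1)`. -/
noncomputable def gff (t α : ℝ) : ℝ := Real.Gamma (t + 1) / Real.Gamma (t - α + 1)

/-- Forward difference operator `Δf(t) = f(t+1) - f(t)`. -/
def fdiff (f : ℝ → ℝ) : ℝ → ℝ := fun t => f (t + 1) - f t

/-- The ν-th fractional sum with base point `a`:
`Δ^{-ν} f(t) = (1/Γ(ν)) ∑_{s=a}^{t-ν} (t-s-1)^(ν-1) f(s)`, the sum running over
`s = a, a+1, ..., t-ν` (for `t ∈ ℕ_{a+ν}`, there are `t-ν-a+1` terms). -/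
noncomputable def fsum (ν a : ℝ) (f : ℝ → ℝ) (t : ℝ) : ℝ :=
  (1 / Real.Gamma ν) *
    ∑ j ∈ Finset.range ((⌊t - ν - a⌋).toNat + 1),
      gff (t - (a + j) - 1) (ν - 1) * f (a + j)

/-- The Caputo-like fractional difference `Δ_*^μ f = Δ^{-(⌈μ⌉-μ)} (Δ^{⌈μ⌉} f)`. -/
noncomputable def caputo (μ a : ℝ) (f : ℝ → ℝ) : ℝ → ℝ :=
  fsum ((⌈μ⌉₊ : ℝ) - μ) a (fdiff^[⌈μ⌉₊] f)

noncomputable def fac (n : ℕ) : ℝ := (n.factorial : ℝ)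

lemma fac_succ (n : ℕ) : fac (n+1) = ((n:ℝ)+1) * fac n := by
  unfold fac; rw [Nat.factorial_succ]; push_cast; ring

lemma fac_ne_zero (n : ℕ) : fac n ≠ 0 := by
  unfold fac; exact_mod_cast (Nat.factorial_pos _).ne'

noncomputable def asc (x : ℝ) (K : ℕ) : ℝ := ∏ i ∈ range K, (x + i)

lemma asc_succ (x : ℝ) (K : ℕ) : asc x (K+1) = asc x K * (x + K) := by
  simp [asc, prod_range_succ]

lemma term1 (c A x F B G : ℝ) (hc : c ≠ 0) (hF : F ≠ 0) (hG : G ≠ 0) :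
    c * (A * x / (c * F) * (B / G)) = x * (A / F * (B / G)) := by
  field_simp

lemma term2 (c A F B y G : ℝ) (hc : c ≠ 0) (hF : F ≠ 0) (hG : G ≠ 0) :
    c * (A / F * (B * y / (c * G))) = y * (A / F * (B / G)) := by
  field_simp

lemma vand (x y : ℝ) : ∀ K : ℕ,
    ∑ k ∈ range (K+1), asc x (K-k) / fac (K-k) * (asc y k / fac k) = asc (x+y) K / fac K := by
  intro K
  induction K with
  | zero => simp [asc, fac]
  | succ K ih =>
    have hK1 : ((K:ℝ)+1) ≠ 0 := by positivity
    have key : ((K:ℝ)+1) * ∑ k ∈ range (K+2), asc x (K+1-k) / fac (K+1-k) * (asc y k / fac k)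
        = (x + y + K) * ∑ k ∈ range (K+1), asc x (K-k) / fac (K-k) * (asc y k / fac k) := by
      rw [mul_sum, mul_sum]
      have split : ∀ k ∈ range (K+2),
          ((K:ℝ)+1) * (asc x (K+1-k) / fac (K+1-k) * (asc y k / fac k))
          = ((K+1-k : ℕ):ℝ) * (asc x (K+1-k) / fac (K+1-k) * (asc y k / fac k))
            + (k:ℝ) * (asc x (K+1-k) / fac (K+1-k) * (asc y k / fac k)) := by
        intro k hk
        have hk2 : k ≤ K + 1 := Nat.lt_succ_iff.mp (mem_range.mp hk)
        have hc : ((K+1-k : ℕ):ℝ) = (K:ℝ) + 1 - k := by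
          rw [Nat.cast_sub hk2]; push_cast; ring
        rw [hc]; ring
      rw [sum_congr rfl split, sum_add_distrib]
      have e1 : ∑ k ∈ range (K+2), ((K+1-k : ℕ):ℝ) * (asc x (K+1-k) / fac (K+1-k) * (asc y k / fac k))
          = ∑ k ∈ range (K+1), (x + ((K-k : ℕ):ℝ)) * (asc x (K-k) / fac (K-k) * (asc y k / fac k)) := by
        rw [sum_range_succ]
        simp only [Nat.sub_self, Nat.cast_zero, zero_mul, add_zero]
        refine sum_congr rfl fun k hk => ?_
        have h1 : K + 1 - k = (K - k) + 1 := by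
          have := Nat.lt_succ_iff.mp (mem_range.mp hk); omega
        rw [h1, asc_succ, fac_succ]
        have hf : fac (K-k) ≠ 0 := fac_ne_zero _
        have h2 : ((K-k:ℕ):ℝ) + 1 ≠ 0 := by positivity
        push_cast
        exact term1 _ _ _ _ _ _ h2 hf (fac_ne_zero k)
      have e2 : ∑ k ∈ range (K+2), (k:ℝ) * (asc x (K+1-k) / fac (K+1-k) * (asc y k / fac k))
          = ∑ k ∈ range (K+1), (y + (k:ℝ)) * (asc x (K-k) / fac (K-k) * (asc y k / fac k)) := by
        rw [sum_range_succ']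
        simp only [Nat.cast_zero, zero_mul, add_zero]
        refine sum_congr rfl fun k hk => ?_
        have h1 : K + 1 - (k+1) = K - k := by omega
        rw [h1, fac_succ]
        rw [show asc y (k+1) = asc y k * (y + k) from asc_succ y k]
        have hf : fac k ≠ 0 := fac_ne_zero _
        have h2 : ((k:ℕ):ℝ) + 1 ≠ 0 := by positivity
        push_cast
        exact term2 _ _ _ _ _ _ h2 (fac_ne_zero _) hf
      rw [e1, e2, ← sum_add_distrib]
      refine sum_congr rfl fun k hk => ?_
      have hkK : k ≤ K := Nat.lt_succ_iff.mp (mem_range.mp hk)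
      have hc : ((K-k : ℕ):ℝ) = (K:ℝ) - k := by
        rw [Nat.cast_sub hkK]
      rw [hc]; ring
    rw [ih] at key
    have step : ∑ k ∈ range (K+2), asc x (K+1-k) / fac (K+1-k) * (asc y k / fac k)
        = (x + y + K) * (asc (x+y) K / fac K) / ((K:ℝ)+1) := by
      rw [eq_div_iff hK1, mul_comm]
      exact key
    rw [show K + 1 + 1 = K + 2 from rfl, step, asc_succ, fac_succ]
    have hf : fac K ≠ 0 := fac_ne_zero _
    field_simp

lemma Gamma_asc {x : ℝ} (hx : 0 < x) (K : ℕ) :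
    Real.Gamma (x + K) = Real.Gamma x * asc x K := by
  induction K with
  | zero => simp [asc]
  | succ K ih =>
    have h : x + (K:ℝ) ≠ 0 := by positivity
    rw [show x + ((K:ℕ)+1:ℕ) = (x + K) + 1 by push_cast; ring, Real.Gamma_add_one h, ih, asc_succ]
    ring


lemma tele (g : ℝ → ℝ) (c : ℝ) : ∀ n : ℕ, g (c + n) = g c + ∑ k ∈ range n, fdiff g (c + k) := by
  intro n
  induction n with
  | zero => simp
  | succ n ih =>
    rw [sum_range_succ, ← add_assoc, ← ih]
    have : fdiff g (c + n) = g (c + n + 1) - g (c + n) := rfl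
    rw [this, show c + ((n:ℕ)+1:ℕ) = c + n + 1 by push_cast; ring]
    ring

lemma fdiff_zero_prop (h : ℝ → ℝ) (a : ℝ) (T : ℕ) (hz : ∀ k ≤ T, fdiff^[k] h a = 0) :
    ∀ t k : ℕ, k + t ≤ T → fdiff^[k] h (a + t) = 0 := by
  intro t
  induction t with
  | zero => intro k hk; simpa using hz k (by omega)
  | succ t ih =>
    intro k hk
    have h1 : fdiff^[k] h (a + t) = 0 := ih k (by omega)
    have h2 : fdiff^[k+1] h (a + t) = 0 := ih (k+1) (by omega)
    rw [Function.iterate_succ_apply' fdiff k h] at h2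
    have e : fdiff^[k] h (a + t + 1) = 0 := by
      have h3 : fdiff (fdiff^[k] h) (a + t) = fdiff^[k] h (a + t + 1) - fdiff^[k] h (a + t) := rfl
      rw [h3, h1, sub_zero] at h2
      exact h2
    rw [show a + ((t:ℕ)+1:ℕ) = a + t + 1 by push_cast; ring]
    exact e

lemma hockey (q M : ℕ) : ∑ i ∈ range (M+1), (q+i).choose q = (q+1+M).choose (q+1) := by
  have h := Nat.sum_Icc_choose (q+M) q
  rw [show Icc q (q+M) = Ico q (q+M+1) by rw [Finset.Ico_add_one_right_eq_Icc], Finset.sum_Ico_eq_sum_range] at h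
  simp only [show q + M + 1 - q = M + 1 by omega] at h
  rw [show q+1+M = q+M+1 by omega, ← h]

lemma discrete_taylor : ∀ (q : ℕ) (h : ℝ → ℝ) (a : ℝ), (∀ k ≤ q, fdiff^[k] h a = 0) → ∀ n : ℕ,
    h (a + (q+1:ℕ) + n) = ∑ j ∈ range (n+1), ((q+n-j).choose q : ℝ) * fdiff^[q+1] h (a + j) := by
  intro q
  induction q with
  | zero =>
    intro h a hz n
    have h0 : h a = 0 := by simpa using hz 0 le_rfl
    rw [show a + ((0:ℕ)+1:ℕ) + (n:ℝ) = a + ((n+1:ℕ):ℝ) by push_cast; ring,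
      tele h a (n+1), h0, zero_add]
    refine sum_congr rfl fun j hj => ?_
    simp [Nat.choose_zero_right]
  | succ q ih =>
    intro h a hz n
    -- h(a + (q+1)) = 0
    have hz' : ∀ k ≤ q + 1, fdiff^[k] h a = 0 := fun k hk => hz k hk
    have h0 : h (a + ((q+1:ℕ):ℝ)) = 0 := by
      have := fdiff_zero_prop h a (q+1) hz' (q+1) 0 (by omega)
      simpa using this
    -- telescope
    have e1 : h (a + ((q+1+1:ℕ):ℝ) + n) = ∑ k ∈ range (n+1), fdiff h ((a + ((q+1:ℕ):ℝ)) + k) := by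
      have := tele h (a + ((q+1:ℕ):ℝ)) (n+1)
      rw [h0, zero_add] at this
      rw [show a + ((q+1+1:ℕ):ℝ) + n = a + ((q+1:ℕ):ℝ) + ((n+1:ℕ):ℝ) by push_cast; ring, this]
    -- apply IH to fdiff h
    have hz2 : ∀ k ≤ q, fdiff^[k] (fdiff h) a = 0 := by
      intro k hk
      rw [← Function.iterate_succ_apply fdiff k h]
      exact hz (k+1) (by omega)
    have e2 : ∀ k : ℕ, fdiff h ((a + ((q+1:ℕ):ℝ)) + k - (q+1:ℕ) + (q+1:ℕ)) =
        fdiff h (a + ((q+1:ℕ):ℝ) + k) := by intro k; ring_nf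
    have e3 : ∀ k : ℕ, fdiff h (a + ((q+1:ℕ):ℝ) + k)
        = ∑ j ∈ range (k+1), ((q+k-j).choose q : ℝ) * fdiff^[q+1+1] h (a + j) := by
      intro k
      have := ih (fdiff h) a hz2 k
      rw [show a + ((q+1:ℕ):ℝ) + k = a + ((q+1:ℕ):ℝ) + (k:ℝ) from rfl]
      rw [show a + ((q+1:ℕ):ℝ) + (k:ℝ) = a + ((q+1:ℕ):ℝ) + (k:ℝ) from rfl]
      have harg : a + ((q+1:ℕ):ℝ) + (k:ℝ) = a + ((q+1:ℕ):ℝ) + (k:ℝ) := rfl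
      rw [show a + ((q+1:ℕ):ℝ) + (k:ℝ) = a + ((q+1:ℕ):ℝ) + (k:ℝ) from rfl]
      calc fdiff h (a + ((q+1:ℕ):ℝ) + (k:ℝ)) = fdiff h (a + ((q+1:ℕ):ℝ) + (k:ℝ)) := rfl
        _ = ∑ j ∈ range (k+1), ((q+k-j).choose q : ℝ) * fdiff^[q+1] (fdiff h) (a + j) := by
            rw [← this]
        _ = ∑ j ∈ range (k+1), ((q+k-j).choose q : ℝ) * fdiff^[q+1+1] h (a + j) := by
            refine sum_congr rfl fun j hj => ?_
            rw [← Function.iterate_succ_apply fdiff (q+1) h]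
    rw [e1]
    rw [sum_congr rfl fun k _ => e3 k]
    -- swap sums
    rw [Finset.sum_comm' (s := range (n+1)) (t := fun k => range (k+1))
      (s' := fun j => Icc j n) (t' := range (n+1))
      (h := by intro k j; simp only [mem_range, mem_Icc]; omega)]
    refine sum_congr rfl fun j hj => ?_
    have hjn : j ≤ n := Nat.lt_succ_iff.mp (mem_range.mp hj)
    rw [← Finset.sum_mul]
    congr 1
    -- ∑ k in Icc j n, choose (q+k-j) q = choose (q+1+n-j) (q+1)
    rw [show Icc j n = Ico j (n+1) by rw [Finset.Ico_add_one_right_eq_Icc], Finset.sum_Ico_eq_sum_range]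
    have hnat : ∑ i ∈ range (n+1-j), (q+(j+i)-j).choose q = (q+1+n-j).choose (q+1) := by
      rw [show n+1-j = (n-j)+1 by omega, show q+1+n-j = q+1+(n-j) by omega, ← hockey q (n-j)]
      exact sum_congr rfl fun i _ => by congr 1; omega
    exact_mod_cast hnat



lemma fac_pos (n : ℕ) : 0 < fac n := by
  unfold fac; exact_mod_cast Nat.factorial_pos _

lemma Gamma_nat (k : ℕ) : Real.Gamma ((k:ℝ)+1) = fac k := by
  unfold fac; exact_mod_cast Real.Gamma_nat_eq_factorial k

lemma gff_eval (x : ℝ) (k : ℕ) : gff (x + (k:ℝ) - 1) (x - 1) = Real.Gamma (x + k) / fac k := by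
  unfold gff
  rw [show x + (k:ℝ) - 1 + 1 = x + k by ring, show x + (k:ℝ) - 1 - (x-1) + 1 = (k:ℝ)+1 by ring,
    Gamma_nat]

lemma caputo_eval (μ ν : ℝ) (m : ℕ) (hm : m = ⌈μ⌉₊) (hν : ν = (m:ℝ) - μ)
    (f : ℝ → ℝ) (a i : ℕ) :
    caputo μ (a:ℝ) f ((a:ℝ) + ν + i) = (1/Real.Gamma ν) *
      ∑ j ∈ range (i+1), (Real.Gamma (ν + ((i-j:ℕ):ℝ)) / fac (i-j)) * fdiff^[m] f ((a:ℝ) + j) := by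
  unfold caputo fsum
  rw [← hm, ← hν]
  have hfl : (⌊(a:ℝ) + ν + (i:ℝ) - ν - (a:ℝ)⌋).toNat = i := by
    rw [show (a:ℝ) + ν + (i:ℝ) - ν - (a:ℝ) = ((i:ℕ):ℝ) by push_cast; ring, Int.floor_natCast]
    simp
  rw [hfl]
  congr 1
  refine sum_congr rfl fun j hj => ?_
  have hji : j ≤ i := Nat.lt_succ_iff.mp (mem_range.mp hj)
  have harg : (a:ℝ) + ν + (i:ℝ) - ((a:ℝ) + (j:ℝ)) - 1 = ν + ((i-j:ℕ):ℝ) - 1 := by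
    rw [Nat.cast_sub hji]; ring
  rw [harg, gff_eval ν (i - j)]

lemma asc_nat (c : ℕ) : ∀ K : ℕ, asc ((c:ℝ)+1) K * fac c = fac (c+K) := by
  intro K
  induction K with
  | zero => simp [asc]
  | succ K ih =>
    rw [asc_succ, show c + (K+1) = (c+K) + 1 by omega, fac_succ]
    push_cast
    nlinarith [ih]

lemma chooseR (c K : ℕ) : ((c+K).choose c : ℝ) * (fac c * fac K) = fac (c+K) := by
  have h := Nat.choose_mul_factorial_mul_factorial (show c ≤ c + K by omega)
  rw [show c + K - c = K by omega] at h
  unfold fac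
  push_cast [← h]
  ring

lemma inner_vand (x y : ℝ) (hx : 0 < x) (hy : 0 < y) (c K : ℕ) (hxy : x + y = (c:ℝ)+1) :
    ∑ k ∈ range (K+1), (Real.Gamma (x+((K-k:ℕ):ℝ))/fac (K-k)) * (Real.Gamma (y+(k:ℝ))/fac k)
      = Real.Gamma x * Real.Gamma y * ((c+K).choose c : ℝ) := by
  have e : ∀ k ∈ range (K+1),
      (Real.Gamma (x+((K-k:ℕ):ℝ))/fac (K-k)) * (Real.Gamma (y+(k:ℝ))/fac k)
      = Real.Gamma x * Real.Gamma y * (asc x (K-k) / fac (K-k) * (asc y k / fac k)) := by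
    intro k hk
    rw [Gamma_asc hx (K-k), Gamma_asc hy k]
    ring
  rw [sum_congr rfl e, ← mul_sum, vand x y K, hxy]
  have h4 : asc ((c:ℝ)+1) K = ((c+K).choose c : ℝ) * fac K := by
    apply mul_right_cancel₀ (fac_ne_zero c)
    rw [asc_nat c K, ← chooseR c K]; ring
  rw [h4]
  have hK := fac_ne_zero K
  field_simp

lemma repr_lemma (μ ν : ℝ) (p m : ℕ) (hμp : (p:ℝ) < μ) (hμm : μ < (m:ℝ)) (hpm : p < m)
    (hm : m = ⌈μ⌉₊) (hν : ν = (m:ℝ) - μ) (f : ℝ → ℝ) (a : ℕ)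
    (hz : ∀ k, p ≤ k → k ≤ m - 1 → fdiff^[k] f (a:ℝ) = 0) (n : ℕ) :
    fdiff^[p] f ((a:ℝ) + ((m-p:ℕ):ℝ) + n)
      = (1/Real.Gamma (μ - p)) * ∑ i ∈ range (n+1),
          (Real.Gamma ((μ - p) + ((n-i:ℕ):ℝ)) / fac (n-i)) * caputo μ (a:ℝ) f ((a:ℝ) + ν + i) := by
  set x : ℝ := μ - p with hxdef
  have hx : 0 < x := by simp [hxdef]; linarith
  have hy : 0 < ν := by rw [hν]; linarith
  set q : ℕ := m - p with hqdef
  have hq : 1 ≤ q := by omega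
  have hxy : x + ν = ((q-1:ℕ):ℝ) + 1 := by
    rw [hxdef, hν, Nat.cast_sub (by omega : 1 ≤ q), hqdef, Nat.cast_sub (le_of_lt hpm)]
    push_cast
    ring
  have hgx : Real.Gamma x ≠ 0 := (Real.Gamma_pos_of_pos hx).ne'
  have hgy : Real.Gamma ν ≠ 0 := (Real.Gamma_pos_of_pos hy).ne'
  -- Taylor expansion of the LHS
  have hzt : ∀ k ≤ q - 1, fdiff^[k] (fdiff^[p] f) (a:ℝ) = 0 := by
    intro k hk
    rw [← Function.iterate_add_apply fdiff k p f]
    exact hz (k+p) (by omega) (by omega)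
  have T := discrete_taylor (q-1) (fdiff^[p] f) (a:ℝ) hzt n
  rw [show q - 1 + 1 = q by omega] at T
  have Titer : ∀ j : ℕ, fdiff^[q] (fdiff^[p] f) ((a:ℝ) + j) = fdiff^[m] f ((a:ℝ) + j) := by
    intro j
    rw [← Function.iterate_add_apply fdiff q p f, show q + p = m by omega]
  rw [sum_congr rfl (fun j _ => by rw [Titer j])] at T
  rw [T]
  -- expand caputo on the RHS
  have expand : ∑ i ∈ range (n+1),
        (Real.Gamma (x + ((n-i:ℕ):ℝ)) / fac (n-i)) * caputo μ (a:ℝ) f ((a:ℝ) + ν + i)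
      = ∑ i ∈ range (n+1), (Real.Gamma (x + ((n-i:ℕ):ℝ)) / fac (n-i)) *
          ((1/Real.Gamma ν) * ∑ j ∈ range (i+1),
            (Real.Gamma (ν + ((i-j:ℕ):ℝ)) / fac (i-j)) * fdiff^[m] f ((a:ℝ)+j)) :=
    sum_congr rfl fun i _ => by rw [caputo_eval μ ν m hm hν f a i]
  rw [expand]
  -- double sum identity
  have dbl : ∑ i ∈ range (n+1), (Real.Gamma (x+((n-i:ℕ):ℝ))/fac (n-i)) *
        ∑ j ∈ range (i+1), (Real.Gamma (ν+((i-j:ℕ):ℝ))/fac (i-j)) * fdiff^[m] f ((a:ℝ)+j)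
      = Real.Gamma x * Real.Gamma ν *
        ∑ j ∈ range (n+1), (((q-1)+(n-j)).choose (q-1) : ℝ) * fdiff^[m] f ((a:ℝ)+j) := by
    simp only [mul_sum]
    rw [Finset.sum_comm' (s := range (n+1)) (t := fun i => range (i+1))
      (s' := fun j => Icc j n) (t' := range (n+1))
      (h := by intro i j; simp only [mem_range, mem_Icc]; omega)]
    refine sum_congr rfl fun j hj => ?_
    have hjn : j ≤ n := Nat.lt_succ_iff.mp (mem_range.mp hj)
    have inner : ∑ i ∈ Icc j n, (Real.Gamma (x+((n-i:ℕ):ℝ))/fac (n-i)) *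
          ((Real.Gamma (ν+((i-j:ℕ):ℝ))/fac (i-j)) * fdiff^[m] f ((a:ℝ)+j))
        = (∑ i ∈ Icc j n, (Real.Gamma (x+((n-i:ℕ):ℝ))/fac (n-i)) *
            (Real.Gamma (ν+((i-j:ℕ):ℝ))/fac (i-j))) * fdiff^[m] f ((a:ℝ)+j) := by
      rw [sum_mul]
      exact sum_congr rfl fun i _ => by ring
    rw [inner]
    have reindex : ∑ i ∈ Icc j n, (Real.Gamma (x+((n-i:ℕ):ℝ))/fac (n-i)) *
          (Real.Gamma (ν+((i-j:ℕ):ℝ))/fac (i-j))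
        = ∑ k ∈ range ((n-j)+1), (Real.Gamma (x+(((n-j)-k:ℕ):ℝ))/fac ((n-j)-k)) *
            (Real.Gamma (ν+(k:ℝ))/fac k) := by
      rw [show Icc j n = Ico j (n+1) by rw [Finset.Ico_add_one_right_eq_Icc], Finset.sum_Ico_eq_sum_range,
        show n + 1 - j = (n-j)+1 by omega]
      refine sum_congr rfl fun k hk => ?_
      have hkn : k ≤ n - j := Nat.lt_succ_iff.mp (mem_range.mp hk)
      rw [show n - (j+k) = (n-j)-k by omega, show j + k - j = k by omega]
    rw [reindex, inner_vand x ν hx hy (q-1) (n-j) hxy]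
    ring
  -- assemble
  have rhs_eq : (1/Real.Gamma x) * ∑ i ∈ range (n+1),
        (Real.Gamma (x + ((n-i:ℕ):ℝ)) / fac (n-i)) *
          ((1/Real.Gamma ν) * ∑ j ∈ range (i+1),
            (Real.Gamma (ν + ((i-j:ℕ):ℝ)) / fac (i-j)) * fdiff^[m] f ((a:ℝ)+j))
      = (1/(Real.Gamma x * Real.Gamma ν)) *
          ∑ i ∈ range (n+1), (Real.Gamma (x+((n-i:ℕ):ℝ))/fac (n-i)) *
            ∑ j ∈ range (i+1), (Real.Gamma (ν+((i-j:ℕ):ℝ))/fac (i-j)) * fdiff^[m] f ((a:ℝ)+j) := by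
    rw [mul_sum, mul_sum]
    exact sum_congr rfl fun i _ => by field_simp
  rw [rhs_eq, dbl]
  rw [show (1/(Real.Gamma x * Real.Gamma ν)) * (Real.Gamma x * Real.Gamma ν *
      ∑ j ∈ range (n+1), (((q-1)+(n-j)).choose (q-1) : ℝ) * fdiff^[m] f ((a:ℝ)+j))
    = ∑ j ∈ range (n+1), (((q-1)+(n-j)).choose (q-1) : ℝ) * fdiff^[m] f ((a:ℝ)+j) by
      field_simp]
  refine sum_congr rfl fun j hj => ?_
  have hjn : j ≤ n := Nat.lt_succ_iff.mp (mem_range.mp hj)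
  rw [show q - 1 + n - j = q - 1 + (n - j) by omega]

theorem stmt15 (μ ν : ℝ) (p : ℕ) (hμ : (p : ℝ) < μ) (hni : ∀ n : ℤ, μ ≠ n)
    (m : ℕ) (hm : m = ⌈μ⌉₊) (hν : ν = m - μ) (f : ℝ → ℝ) (a b : ℕ)
    (hb : a + m - p ≤ b) (hz : ∀ k, p ≤ k → k ≤ m - 1 → fdiff^[k] f a = 0)
    (γ δ r : ℝ) (hγ : 1 < γ) (hδ : 1 < δ) (hγδ : 1 / γ + 1 / δ = 1) (hr : 1 ≤ r) :
    (∑ j ∈ Finset.Icc (a + m - p) b, |fdiff^[p] f (j : ℝ)| ^ r) ^ (1 / r) ≤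
      (1 / Real.Gamma (μ - p)) *
        (∑ j ∈ Finset.Icc (a + m - p) b,
            (∑ i ∈ Finset.range (j - (a + m - p) + 1),
                gff ((j : ℝ) - (a + ν + i) - 1) (μ - p - 1) ^ γ) ^ (r / γ)) ^ (1 / r) *
        (∑ i ∈ Finset.range (b - (a + m - p) + 1), |caputo μ a f (a + ν + i)| ^ δ) ^ (1 / δ) := by
  have hμm : μ < (m:ℝ) := by
    refine lt_of_le_of_ne (hm ▸ Nat.le_ceil μ) ?_
    have := hni (m:ℤ)
    simpa using this
  have hpm : p < m := by exact_mod_cast hμ.trans hμm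
  have hx : 0 < μ - (p:ℝ) := by linarith
  have hΓx : 0 < Real.Gamma (μ - (p:ℝ)) := Real.Gamma_pos_of_pos hx
  set c : ℝ := 1 / Real.Gamma (μ - (p:ℝ)) with hcdef
  have hc0 : 0 ≤ c := by positivity
  have hr0 : 0 < r := lt_of_lt_of_le one_pos hr
  have hγ0 : 0 < γ := lt_trans one_pos hγ
  have hδ0 : 0 < δ := lt_trans one_pos hδ
  have hconj : Real.HolderConjugate γ δ := Real.holderConjugate_iff.mpr ⟨hγ, by simpa [one_div] using hγδ⟩
  set Dk : ℕ → ℝ := fun k => Real.Gamma ((μ - (p:ℝ)) + (k:ℝ)) / fac k with hDdef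
  have hDpos : ∀ k, 0 < Dk k := by
    intro k
    have : 0 < μ - (p:ℝ) + (k:ℝ) := by positivity
    exact div_pos (Real.Gamma_pos_of_pos this) (fac_pos k)
  set N : ℕ := b - (a + m - p) with hNdef
  set B : ℝ := (∑ i ∈ Finset.range (N + 1),
    |caputo μ (a:ℝ) f ((a:ℝ) + ν + i)| ^ δ) ^ (1/δ) with hBdef
  have hB0 : 0 ≤ B :=
    Real.rpow_nonneg (sum_nonneg fun i _ => Real.rpow_nonneg (abs_nonneg _) δ) _
  have kernel_eq : ∀ j ∈ Finset.Icc (a+m-p) b, ∀ i ∈ Finset.range (j - (a+m-p) + 1),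
      gff ((j:ℝ) - ((a:ℝ) + ν + i) - 1) (μ - (p:ℝ) - 1) = Dk (j - (a+m-p) - i) := by
    intro j hj i hi
    have hjl : a + m - p ≤ j := (Finset.mem_Icc.mp hj).1
    have hin : i ≤ j - (a+m-p) := Nat.lt_succ_iff.mp (mem_range.mp hi)
    have hjeq : j = a + (m - p) + (j - (a+m-p)) := by omega
    have harg : (j:ℝ) - ((a:ℝ) + ν + i) - 1
        = (μ - (p:ℝ)) + ((j - (a+m-p) - i : ℕ):ℝ) - 1 := by
      have h1 : (j:ℝ) = (a:ℝ) + ((m-p:ℕ):ℝ) + ((j - (a+m-p) : ℕ):ℝ) := by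
        exact_mod_cast congrArg (Nat.cast (R := ℝ)) hjeq
      rw [h1, Nat.cast_sub (le_of_lt hpm), Nat.cast_sub hin, hν]
      ring
    rw [harg, gff_eval (μ - (p:ℝ)) (j - (a+m-p) - i)]
  have stepI : ∀ j ∈ Finset.Icc (a+m-p) b, |fdiff^[p] f (j:ℝ)| ≤
      c * (∑ i ∈ Finset.range (j - (a+m-p) + 1), Dk (j - (a+m-p) - i) ^ γ) ^ (1/γ) * B := by
    intro j hj
    have hjl : a + m - p ≤ j := (Finset.mem_Icc.mp hj).1
    have hjb : j ≤ b := (Finset.mem_Icc.mp hj).2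
    set n : ℕ := j - (a+m-p) with hn
    have hjeq : j = a + (m - p) + n := by omega
    have hjcast : (j:ℝ) = (a:ℝ) + ((m-p:ℕ):ℝ) + (n:ℝ) := by
      exact_mod_cast congrArg (Nat.cast (R := ℝ)) hjeq
    have rep : fdiff^[p] f (j:ℝ) = c * ∑ i ∈ Finset.range (n+1),
        Dk (n-i) * caputo μ (a:ℝ) f ((a:ℝ) + ν + i) := by
      rw [hjcast]
      exact repr_lemma μ ν p m hμ hμm hpm hm hν f a hz n
    have tri : |∑ i ∈ Finset.range (n+1), Dk (n-i) * caputo μ (a:ℝ) f ((a:ℝ) + ν + i)|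
        ≤ ∑ i ∈ Finset.range (n+1), Dk (n-i) * |caputo μ (a:ℝ) f ((a:ℝ) + ν + i)| := by
      refine (Finset.abs_sum_le_sum_abs _ _).trans (le_of_eq (sum_congr rfl fun i _ => ?_))
      rw [abs_mul, abs_of_nonneg (hDpos _).le]
    have holder : ∑ i ∈ Finset.range (n+1), Dk (n-i) * |caputo μ (a:ℝ) f ((a:ℝ) + ν + i)|
        ≤ (∑ i ∈ Finset.range (n+1), Dk (n-i) ^ γ) ^ (1/γ) *
          (∑ i ∈ Finset.range (n+1), |caputo μ (a:ℝ) f ((a:ℝ) + ν + i)| ^ δ) ^ (1/δ) := by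
      have h := Real.inner_le_Lp_mul_Lq (Finset.range (n+1))
        (fun i => Dk (n-i)) (fun i => |caputo μ (a:ℝ) f ((a:ℝ) + ν + i)|) hconj
      simpa [abs_of_nonneg (hDpos _).le, abs_abs] using h
    have third : (∑ i ∈ Finset.range (n+1), |caputo μ (a:ℝ) f ((a:ℝ) + ν + i)| ^ δ) ^ (1/δ)
        ≤ B := by
      rw [hBdef]
      refine Real.rpow_le_rpow (sum_nonneg fun i _ => Real.rpow_nonneg (abs_nonneg _) δ) ?_
        (by positivity)
      refine Finset.sum_le_sum_of_subset_of_nonneg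
        (Finset.range_subset_range.2 (by omega)) (fun i _ _ => Real.rpow_nonneg (abs_nonneg _) δ)
    calc |fdiff^[p] f (j:ℝ)|
        = c * |∑ i ∈ Finset.range (n+1), Dk (n-i) * caputo μ (a:ℝ) f ((a:ℝ) + ν + i)| := by
          rw [rep, abs_mul, abs_of_nonneg hc0]
      _ ≤ c * ((∑ i ∈ Finset.range (n+1), Dk (n-i) ^ γ) ^ (1/γ) *
            (∑ i ∈ Finset.range (n+1), |caputo μ (a:ℝ) f ((a:ℝ) + ν + i)| ^ δ) ^ (1/δ)) :=
          mul_le_mul_of_nonneg_left (tri.trans holder) hc0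
      _ ≤ c * ((∑ i ∈ Finset.range (n+1), Dk (n-i) ^ γ) ^ (1/γ) * B) := by
          refine mul_le_mul_of_nonneg_left (mul_le_mul_of_nonneg_left third ?_) hc0
          exact Real.rpow_nonneg (sum_nonneg fun i _ => Real.rpow_nonneg (hDpos _).le γ) _
      _ = c * (∑ i ∈ Finset.range (n+1), Dk (n-i) ^ γ) ^ (1/γ) * B := by ring
  have K0 : ∀ j : ℕ, (0:ℝ) ≤ ∑ i ∈ Finset.range (j - (a+m-p) + 1), Dk (j - (a+m-p) - i) ^ γ :=
    fun j => sum_nonneg fun i _ => Real.rpow_nonneg (hDpos _).le γ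
  calc (∑ j ∈ Finset.Icc (a+m-p) b, |fdiff^[p] f (j:ℝ)| ^ r) ^ (1/r)
      ≤ (∑ j ∈ Finset.Icc (a+m-p) b,
          (c * (∑ i ∈ Finset.range (j - (a+m-p) + 1), Dk (j - (a+m-p) - i) ^ γ) ^ (1/γ) * B) ^ r)
          ^ (1/r) := by
        refine Real.rpow_le_rpow (sum_nonneg fun j _ => Real.rpow_nonneg (abs_nonneg _) r)
          (sum_le_sum fun j hj => Real.rpow_le_rpow (abs_nonneg _) (stepI j hj) hr0.le)
          (by positivity)
    _ = c * (∑ j ∈ Finset.Icc (a+m-p) b,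
          (∑ i ∈ Finset.range (j - (a+m-p) + 1), Dk (j - (a+m-p) - i) ^ γ) ^ (r/γ)) ^ (1/r)
          * B := by
        have e1 : ∀ j ∈ Finset.Icc (a+m-p) b,
            (c * (∑ i ∈ Finset.range (j - (a+m-p) + 1), Dk (j - (a+m-p) - i) ^ γ) ^ (1/γ) * B) ^ r
            = (c ^ r * B ^ r) *
              (∑ i ∈ Finset.range (j - (a+m-p) + 1), Dk (j - (a+m-p) - i) ^ γ) ^ (r/γ) := by
          intro j hj
          rw [Real.mul_rpow (mul_nonneg hc0 (Real.rpow_nonneg (K0 j) _)) hB0,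
            Real.mul_rpow hc0 (Real.rpow_nonneg (K0 j) _),
            ← Real.rpow_mul (K0 j), show 1/γ * r = r/γ by ring]
          ring
        rw [sum_congr rfl e1, ← mul_sum,
          Real.mul_rpow (by positivity)
            (sum_nonneg fun j _ => Real.rpow_nonneg (K0 j) _),
          Real.mul_rpow (Real.rpow_nonneg hc0 r) (Real.rpow_nonneg hB0 r),
          ← Real.rpow_mul hc0, ← Real.rpow_mul hB0,
          show r * (1/r) = 1 by field_simp, Real.rpow_one, Real.rpow_one]
        ring
    _ = c * (∑ j ∈ Finset.Icc (a+m-p) b,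
          (∑ i ∈ Finset.range (j - (a+m-p) + 1),
            gff ((j:ℝ) - ((a:ℝ) + ν + i) - 1) (μ - (p:ℝ) - 1) ^ γ) ^ (r/γ)) ^ (1/r) * B := by
        have e4 : (∑ j ∈ Finset.Icc (a+m-p) b,
              (∑ i ∈ Finset.range (j - (a+m-p) + 1), Dk (j - (a+m-p) - i) ^ γ) ^ (r/γ))
            = ∑ j ∈ Finset.Icc (a+m-p) b,
              (∑ i ∈ Finset.range (j - (a+m-p) + 1),
                gff ((j:ℝ) - ((a:ℝ) + ν + i) - 1) (μ - (p:ℝ) - 1) ^ γ) ^ (r/γ) := by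
          refine sum_congr rfl fun j hj => ?_
          congr 1
          exact sum_congr rfl fun i hi => by rw [kernel_eq j hj i hi]
        rw [e4]
end

section
/- Let 0 < μ₁ < μ₂ < ... < μ_k with each μ_l non-integer, m_l = ⌈μ_l⌉, ν_l = m_l - μ_l, f defined on ℕ_a, a ∈ ℤ⁺, with Δ^τ f(a) = 0 for τ = 0, 1, ..., m_k - 1. Let r ≥ 1 and C_l(s) > 0 on [a+ν_l, b-μ_l]. Set B_l = ∑_{s=a+ν_l}^{b-μ_l} C_l(s)(Δ_*^{μ_l} f(s))², δ* = max_{1≤l≤k} (1/Γ(μ_l)²)·[∑_{j=a+m_l}^{b} (∑_{s=a+ν_l}^{j-μ_l} ((j-s-1)^(μ_l-1))²)^{r/2}]^{2/r}, and ρ* = max_{1≤l≤k} max_{s ∈ [a+ν_l, b-μ_l]} 1/C_l(s). Then (∑_{j=a+m_k}^{b} |f(j)|^r)^{1/r} ≤ √(δ*·ρ*)·((∑_{l=1}^{k} B_l)/k)^{1/2}. -/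
open Finset

noncomputable def Gq (μ : ℝ) (n : ℕ) : ℝ := Real.Gamma (n + μ) / Real.Gamma (n + 1)


lemma Gq_zero (μ : ℝ) : Gq μ 0 = Real.Gamma μ := by
  simp [Gq, Real.Gamma_one]

lemma Gq_succ' (μ : ℝ) (hμ : 0 < μ) (n : ℕ) :
    ((n:ℝ) + 1) * Gq μ (n+1) = ((n : ℝ) + μ) * Gq μ n := by
  have h1 : Real.Gamma (((n+1 : ℕ):ℝ) + μ) = ((n:ℝ) + μ) * Real.Gamma (n + μ) := by
    have := Real.Gamma_add_one (s := (n:ℝ) + μ) (by positivity)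
    push_cast
    rw [show (n:ℝ) + 1 + μ = ((n:ℝ) + μ) + 1 by ring, this]
  have h2 : Real.Gamma (((n+1 : ℕ):ℝ) + 1) = ((n:ℝ) + 1) * Real.Gamma ((n:ℝ) + 1) := by
    have := Real.Gamma_add_one (s := (n:ℝ) + 1) (by positivity)
    push_cast
    rw [show (n:ℝ) + 1 + 1 = ((n:ℝ) + 1) + 1 by ring, this]
  have hΓ : Real.Gamma ((n:ℝ) + 1) ≠ 0 := (Real.Gamma_pos_of_pos (by positivity)).ne'
  have hn1 : ((n:ℝ) + 1) ≠ 0 := by positivity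
  rw [Gq, Gq, h1, h2]
  field_simp

lemma Gq_pos (μ : ℝ) (hμ : 0 < μ) (n : ℕ) : 0 < Gq μ n :=
  div_pos (Real.Gamma_pos_of_pos (by positivity)) (Real.Gamma_pos_of_pos (by positivity))

lemma gamma_conv (μ ν : ℝ) (hμ : 0 < μ) (hν : 0 < ν) (M : ℕ) :
    ∑ q ∈ Finset.range (M+1), Gq μ (M-q) * Gq ν q =
    Real.Gamma μ * Real.Gamma ν / Real.Gamma (μ+ν) * Gq (μ+ν) M := by
  induction M with
  | zero =>
    rw [show (0:ℕ)+1 = 1 from rfl, Finset.sum_range_one]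
    rw [Gq_zero, Gq_zero, Gq_zero]
    have : Real.Gamma (μ+ν) ≠ 0 := (Real.Gamma_pos_of_pos (by positivity)).ne'
    field_simp
  | succ M ih =>
    have key : ((M:ℝ)+1) * ∑ q ∈ Finset.range (M+2), Gq μ (M+1-q) * Gq ν q
        = ((M:ℝ) + μ + ν) * ∑ q ∈ Finset.range (M+1), Gq μ (M-q) * Gq ν q := by
      rw [Finset.mul_sum, Finset.mul_sum]
      have split : ∀ q ∈ Finset.range (M+2),
          ((M:ℝ)+1) * (Gq μ (M+1-q) * Gq ν q)
          = ((M+1-q : ℕ) : ℝ) * Gq μ (M+1-q) * Gq ν q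
            + Gq μ (M+1-q) * ((q:ℝ) * Gq ν q) := by
        intro q hq
        have hq' : q ≤ M+1 := by have := Finset.mem_range.mp hq; omega
        have : ((M+1-q : ℕ) : ℝ) = (M:ℝ) + 1 - q := by
          push_cast [Nat.cast_sub hq']; ring
        rw [this]; ring
      rw [Finset.sum_congr rfl split, Finset.sum_add_distrib]
      have e1 : ∑ q ∈ Finset.range (M+2), ((M+1-q : ℕ) : ℝ) * Gq μ (M+1-q) * Gq ν q
          = ∑ q ∈ Finset.range (M+1), (((M-q:ℕ):ℝ) + μ) * Gq μ (M-q) * Gq ν q := by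
        rw [Finset.sum_range_succ]
        simp only [Nat.sub_self, Nat.cast_zero, zero_mul]
        rw [add_zero]
        apply Finset.sum_congr rfl
        intro q hq
        have hq' : q ≤ M := by have := Finset.mem_range.mp hq; omega
        have h1 : M + 1 - q = (M - q) + 1 := by omega
        have hc : ((M-q+1 : ℕ):ℝ) = ((M-q:ℕ):ℝ) + 1 := by push_cast; ring
        rw [h1, hc, Gq_succ' μ hμ (M-q)]
      have e2 : ∑ q ∈ Finset.range (M+2), Gq μ (M+1-q) * ((q:ℝ) * Gq ν q)
          = ∑ q ∈ Finset.range (M+1), Gq μ (M-q) * ((((q:ℕ):ℝ) + ν) * Gq ν q) := by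
        rw [Finset.sum_range_succ']
        simp only [Nat.cast_zero, zero_mul, mul_zero, add_zero]
        apply Finset.sum_congr rfl
        intro q hq
        have h1 : M + 1 - (q+1) = M - q := by omega
        have hc : ((q+1 : ℕ):ℝ) = ((q:ℕ):ℝ) + 1 := by push_cast; ring
        rw [h1, hc, Gq_succ' ν hν q]
      rw [e1, e2, ← Finset.sum_add_distrib]
      apply Finset.sum_congr rfl
      intro q hq
      have hq' : q ≤ M := by have := Finset.mem_range.mp hq; omega
      have : ((M-q:ℕ):ℝ) = (M:ℝ) - q := by push_cast [Nat.cast_sub hq']; ring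
      rw [this]; ring
    have hM1 : ((M:ℝ)+1) ≠ 0 := by positivity
    have hS : ∑ q ∈ Finset.range (M+2), Gq μ (M+1-q) * Gq ν q
        = ((M:ℝ) + μ + ν) * (∑ q ∈ Finset.range (M+1), Gq μ (M-q) * Gq ν q) / ((M:ℝ)+1) := by
      rw [eq_div_iff hM1]; linear_combination key
    have hG : Gq (μ+ν) (M+1) = ((M:ℝ)+μ+ν) * Gq (μ+ν) M / ((M:ℝ)+1) := by
      rw [eq_div_iff hM1]; linear_combination Gq_succ' (μ+ν) (by positivity) M
    rw [show M+1+1 = M+2 from rfl, hS, ih, hG]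
    ring

lemma hockey_s16 (m : ℕ) : ∀ M : ℕ, ∑ u ∈ Finset.range (M+1), Nat.choose (u+m) m
    = Nat.choose (M+m+1) (m+1) := by
  intro M
  induction M with
  | zero => simp
  | succ M ih =>
    rw [Finset.sum_range_succ, ih]
    have e : M+1+m+1 = (M+m+1)+1 := by omega
    have e2 : M+1+m = M+m+1 := by omega
    rw [e, e2]
    conv_rhs => rw [Nat.choose_succ_succ (M+m+1) m]
    simp only [Nat.succ_eq_add_one]
    omega

lemma sum_Ico_choose (m N q : ℕ) (hm : 1 ≤ m) (hq : q ≤ N) :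
    ∑ p ∈ Finset.Ico (q+1) (N+2), Nat.choose (N+m-p) (m-1)
      = Nat.choose (N-q+m) m := by
  rw [Finset.sum_Ico_eq_sum_range]
  have h1 : N+2-(q+1) = (N-q)+1 := by omega
  rw [h1]
  have h2 : ∀ u ∈ Finset.range ((N-q)+1),
      Nat.choose (N+m-(q+1+u)) (m-1)
        = (fun j => Nat.choose (j + (m-1)) (m-1)) ((N-q)+1-1-u) := by
    intro u hu
    have hu' := Finset.mem_range.mp hu
    congr 1
    omega
  rw [Finset.sum_congr rfl h2,
    Finset.sum_range_reflect (fun j => Nat.choose (j + (m-1)) (m-1)) ((N-q)+1),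
    hockey_s16 (m-1) (N-q)]
  congr 1 <;> omega

lemma telescope_iter (f : ℝ → ℝ) (m : ℕ) (a : ℝ) (p : ℕ) :
    fdiff^[m] f (a + p) = fdiff^[m] f a + ∑ q ∈ Finset.range p, fdiff^[m+1] f (a + q) := by
  induction p with
  | zero => simp
  | succ p ih =>
    rw [Finset.sum_range_succ, ← add_assoc, ← ih]
    have h1 : fdiff^[m+1] f (a + p) = fdiff^[m] f (a + p + 1) - fdiff^[m] f (a + p) := by
      rw [Function.iterate_succ_apply' fdiff m f]
      rfl
    rw [h1]
    have h2 : (a : ℝ) + ((p+1 : ℕ):ℝ) = a + p + 1 := by push_cast; ring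
    rw [h2]
    ring

lemma taylor_rep (a : ℕ) (f : ℝ → ℝ) :
    ∀ m : ℕ, 1 ≤ m → (∀ τ < m, fdiff^[τ] f a = 0) → ∀ N : ℕ,
      f ((a:ℝ) + m + N)
        = ∑ p ∈ Finset.range (N+1),
            (Nat.choose (N-p+m-1) (m-1) : ℝ) * fdiff^[m] f ((a:ℝ) + p) := by
  intro m hm1
  induction m, hm1 using Nat.le_induction with
  | base =>
    intro hz N
    have h0 : f (a:ℝ) = 0 := hz 0 (by omega)
    simp only [show (1:ℕ)-1 = 0 from rfl, Nat.choose_zero_right, Nat.cast_one, one_mul,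
      Function.iterate_one]
    have hsc : ∀ p ∈ Finset.range (N+1), fdiff f ((a:ℝ)+(p:ℕ))
        = (fun q : ℕ => f ((a:ℝ)+(q:ℕ))) (p+1) - (fun q : ℕ => f ((a:ℝ)+(q:ℕ))) p := by
      intro p hp
      simp only [fdiff]
      push_cast
      ring_nf
    rw [Finset.sum_congr rfl hsc, Finset.sum_range_sub (fun q : ℕ => f ((a:ℝ)+(q:ℕ)))]
    simp only [Nat.cast_zero, add_zero, h0, sub_zero]
    congr 1
    push_cast
    ring
  | succ m hm ih =>
    intro hz N
    have hzm : ∀ τ < m, fdiff^[τ] f a = 0 := fun τ hτ => hz τ (by omega)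
    have hrep := ih hzm (N+1)
    have harg : (a:ℝ) + ((m+1:ℕ):ℝ) + N = (a:ℝ) + m + ((N+1:ℕ):ℝ) := by push_cast; ring
    rw [harg, hrep]
    have hm0 : fdiff^[m] f a = 0 := hz m (by omega)
    have hexp : ∀ p ∈ Finset.range (N+2),
        ((Nat.choose (N+1-p+m-1) (m-1)):ℝ) * fdiff^[m] f ((a:ℝ)+(p:ℕ))
        = ∑ q ∈ Finset.range p,
            ((Nat.choose (N+1-p+m-1) (m-1)):ℝ) * fdiff^[m+1] f ((a:ℝ)+(q:ℕ)) := by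
      intro p hp
      rw [telescope_iter, hm0, zero_add, Finset.mul_sum]
    rw [Finset.sum_congr rfl hexp]
    have hswap : ∀ (x y : ℕ), x ∈ Finset.range (N+2) ∧ y ∈ Finset.range x ↔
        x ∈ Finset.Ico (y+1) (N+2) ∧ y ∈ Finset.range (N+1) := by
      intro x y
      simp only [Finset.mem_range, Finset.mem_Ico]
      omega
    rw [Finset.sum_comm' hswap]
    apply Finset.sum_congr rfl
    intro q hq
    have hq' : q ≤ N := by have := Finset.mem_range.mp hq; omega
    rw [← Finset.sum_mul]
    have hsum : ∑ p ∈ Finset.Ico (q+1) (N+2), ((Nat.choose (N+1-p+m-1) (m-1)):ℝ)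
        = ((Nat.choose (N-q+m) m):ℝ) := by
      rw [← sum_Ico_choose m N q hm hq']
      push_cast
      apply Finset.sum_congr rfl
      intro p hp
      have hp' := Finset.mem_Ico.mp hp
      congr 2
      omega
    rw [hsum]
    congr 2

lemma gff_eq_Gq (ν : ℝ) (n : ℕ) : gff ((n:ℝ) + ν - 1) (ν - 1) = Gq ν n := by
  unfold gff Gq
  congr 1 <;> ring

lemma Gq_nat_div (m : ℕ) (hm : 1 ≤ m) (n : ℕ) :
    Gq (m:ℝ) n / Real.Gamma (m:ℝ) = (Nat.choose (n+m-1) (m-1) : ℝ) := by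
  have e1 : (n:ℝ) + m = ((n+m-1 : ℕ):ℝ) + 1 := by
    have : n+m-1+1 = n+m := by omega
    rw [show ((n+m-1 : ℕ):ℝ) + 1 = ((n+m-1+1 : ℕ):ℝ) by push_cast; ring, this]
    push_cast; ring
  have e2 : (m:ℝ) = ((m-1 : ℕ):ℝ) + 1 := by
    rw [show ((m-1 : ℕ):ℝ) + 1 = ((m-1+1 : ℕ):ℝ) by push_cast; ring, show m-1+1 = m by omega]
  have h1 : Real.Gamma ((n:ℝ) + m) = ((n+m-1).factorial : ℝ) := by
    rw [e1, Real.Gamma_nat_eq_factorial]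
  have h2 : Real.Gamma ((n:ℝ) + 1) = (n.factorial : ℝ) := Real.Gamma_nat_eq_factorial n
  have h3 : Real.Gamma (m:ℝ) = ((m-1).factorial : ℝ) := by
    rw [e2, Real.Gamma_nat_eq_factorial]
  rw [Gq, h1, h2, h3, Nat.cast_choose ℝ (show m-1 ≤ n+m-1 by omega)]
  have e3 : n+m-1-(m-1) = n := by omega
  rw [e3]
  have f1 : ((n.factorial : ℕ):ℝ) ≠ 0 := by positivity
  have f2 : (((m-1).factorial : ℕ):ℝ) ≠ 0 := by positivity
  field_simp

lemma repr_lemma_s16 (μ : ℝ) (m : ℕ) (hmdef : m = ⌈μ⌉₊) (hμ : 0 < μ) (hcm : μ < m)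
    (a : ℕ) (f : ℝ → ℝ) (hz : ∀ τ < m, fdiff^[τ] f ↑a = 0)
    (J : ℕ) (hJ : a + m ≤ J) :
    (1 / Real.Gamma μ) *
      ∑ i ∈ Finset.range (J - (a + m) + 1),
        gff ((J:ℝ) - ((a:ℝ) + ((m:ℝ) - μ) + i) - 1) (μ - 1) *
          caputo μ a f ((a:ℝ) + ((m:ℝ) - μ) + i) = f (J:ℝ) := by
  have hm1 : 1 ≤ m := by
    have : 0 < (m:ℝ) := lt_trans hμ hcm
    exact_mod_cast Nat.one_le_iff_ne_zero.mpr (by exact_mod_cast this.ne')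
  set ν : ℝ := (m:ℝ) - μ with hνdef
  have hν : 0 < ν := by simp only [hνdef]; linarith
  have hμν : μ + ν = (m:ℝ) := by rw [hνdef]; ring
  obtain ⟨N, hN⟩ : ∃ N, J = a + m + N := ⟨J - (a+m), by omega⟩
  have hNr : J - (a + m) = N := by omega
  rw [hNr]
  have hJr : (J:ℝ) = (a:ℝ) + m + N := by rw [hN]; push_cast; ring
  have hterm : ∀ i ∈ Finset.range (N+1),
      gff ((J:ℝ) - ((a:ℝ) + ν + i) - 1) (μ - 1) * caputo μ a f ((a:ℝ) + ν + i)
      = (1 / Real.Gamma ν) * ∑ p ∈ Finset.range (i+1),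
          Gq μ (N-i) * (Gq ν (i-p) * fdiff^[m] f ((a:ℝ) + p)) := by
    intro i hi
    have hi' : i ≤ N := by have := Finset.mem_range.mp hi; omega
    have h1 : gff ((J:ℝ) - ((a:ℝ) + ν + i) - 1) (μ - 1) = Gq μ (N-i) := by
      rw [hJr]
      have e : (a:ℝ) + m + N - ((a:ℝ) + ν + i) - 1 = ((N-i : ℕ):ℝ) + μ - 1 := by
        rw [Nat.cast_sub hi', hνdef]; ring
      rw [e, gff_eq_Gq]
    have hcap : caputo μ a f ((a:ℝ) + ν + i)
        = (1 / Real.Gamma ν) * ∑ p ∈ Finset.range (i+1),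
            Gq ν (i-p) * fdiff^[m] f ((a:ℝ) + p) := by
      rw [caputo, ← hmdef, ← hνdef, fsum]
      have hfl : (⌊(a:ℝ) + ν + i - ν - a⌋).toNat = i := by
        rw [show (a:ℝ) + ν + i - ν - a = ((i:ℕ):ℝ) by ring, Int.floor_natCast]
        exact Int.toNat_natCast i
      rw [hfl]
      congr 1
      apply Finset.sum_congr rfl
      intro p hp
      have hp' : p ≤ i := by have := Finset.mem_range.mp hp; omega
      have e : (a:ℝ) + ν + i - ((a:ℝ) + p) - 1 = ((i-p : ℕ):ℝ) + ν - 1 := by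
        rw [Nat.cast_sub hp']; ring
      rw [e, gff_eq_Gq]
    rw [h1, hcap, ← mul_assoc, mul_comm (Gq μ (N-i)) (1/Real.Gamma ν), mul_assoc,
      Finset.mul_sum]
  rw [Finset.sum_congr rfl hterm, ← Finset.mul_sum]
  have hswap : ∀ x y : ℕ, x ∈ Finset.range (N+1) ∧ y ∈ Finset.range (x+1) ↔
      x ∈ Finset.Ico y (N+1) ∧ y ∈ Finset.range (N+1) := by
    intro x y
    simp only [Finset.mem_range, Finset.mem_Ico]
    omega
  rw [Finset.sum_comm' hswap]
  have hinner : ∀ p ∈ Finset.range (N+1),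
      ∑ i ∈ Finset.Ico p (N+1), Gq μ (N-i) * (Gq ν (i-p) * fdiff^[m] f ((a:ℝ)+p))
      = (Real.Gamma μ * Real.Gamma ν / Real.Gamma (μ+ν)) *
          (Gq (μ+ν) (N-p) * fdiff^[m] f ((a:ℝ)+p)) := by
    intro p hp
    have hp' : p ≤ N := by have := Finset.mem_range.mp hp; omega
    rw [Finset.sum_Ico_eq_sum_range]
    have e1 : N+1-p = (N-p)+1 := by omega
    rw [e1]
    have h2 : ∀ q ∈ Finset.range ((N-p)+1),
        Gq μ (N-(p+q)) * (Gq ν ((p+q)-p) * fdiff^[m] f ((a:ℝ)+p))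
        = (Gq μ ((N-p)-q) * Gq ν q) * fdiff^[m] f ((a:ℝ)+p) := by
      intro q hq
      have e2 : N-(p+q) = (N-p)-q := by omega
      have e3 : (p+q)-p = q := by omega
      rw [e2, e3]; ring
    rw [Finset.sum_congr rfl h2, ← Finset.sum_mul, gamma_conv μ ν hμ hν (N-p)]
    ring
  rw [Finset.sum_congr rfl hinner]
  rw [show f (J:ℝ) = f ((a:ℝ)+m+N) from by rw [hJr],
    taylor_rep a f m hm1 hz N, Finset.mul_sum, Finset.mul_sum]
  apply Finset.sum_congr rfl
  intro p hp
  have hμne : Real.Gamma μ ≠ 0 := (Real.Gamma_pos_of_pos hμ).ne'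
  have hνne : Real.Gamma ν ≠ 0 := (Real.Gamma_pos_of_pos hν).ne'
  have hmne : Real.Gamma ((m:ℝ)) ≠ 0 := by
    apply (Real.Gamma_pos_of_pos _).ne'
    exact_mod_cast hm1
  rw [hμν]
  have hgq := Gq_nat_div m hm1 (N-p)
  rw [div_eq_iff hmne] at hgq
  rw [hgq]
  have : N-p+m-1 = N-p+m-1 := rfl
  field_simp

lemma per_l (μ : ℝ) (m : ℕ) (hmdef : m = ⌈μ⌉₊) (hμ : 0 < μ) (hcm : μ < m)
    (a b mK : ℕ) (hml : m ≤ mK) (f : ℝ → ℝ) (hz : ∀ τ < mK, fdiff^[τ] f ↑a = 0)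
    (r : ℝ) (hr : 1 ≤ r) (Cl : ℝ → ℝ)
    (hC : ∀ i : ℕ, i ≤ b - (a + m) → 0 < Cl ((a:ℝ) + ((m:ℝ) - μ) + i)) :
    (∑ j ∈ Finset.Icc (a + mK) b, |f (j:ℝ)| ^ r) ^ (2/r) ≤
      ((1 / Real.Gamma μ ^ 2) *
        (∑ j ∈ Finset.Icc (a + m) b,
          (∑ i ∈ Finset.range (j - (a + m) + 1),
            gff ((j:ℝ) - ((a:ℝ) + ((m:ℝ) - μ) + i) - 1) (μ - 1) ^ 2) ^ (r/2)) ^ (2/r))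
      * (((Finset.range (b - (a + m) + 1)).sup' Finset.nonempty_range_add_one
            (fun i => 1 / Cl ((a:ℝ) + ((m:ℝ) - μ) + i)))
        * (∑ i ∈ Finset.range (b - (a + m) + 1),
            Cl ((a:ℝ) + ((m:ℝ) - μ) + i) *
              caputo μ a f ((a:ℝ) + ((m:ℝ) - μ) + i) ^ 2)) := by
  have hr0 : (0:ℝ) < r := lt_of_lt_of_le one_pos hr
  have hΓ : 0 < Real.Gamma μ := Real.Gamma_pos_of_pos hμ
  set ν : ℝ := (m:ℝ) - μ with hν
  set T : ℕ → ℝ := fun j => ∑ i ∈ Finset.range (j - (a + m) + 1),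
      gff ((j:ℝ) - ((a:ℝ) + ν + i) - 1) (μ - 1) ^ 2 with hT
  set cap : ℕ → ℝ := fun i => caputo μ a f ((a:ℝ) + ν + i) with hcapdef
  set Bl : ℝ := ∑ i ∈ Finset.range (b-(a+m)+1), Cl ((a:ℝ)+ν+i) * cap i ^ 2 with hBl
  set ρ : ℝ := (Finset.range (b-(a+m)+1)).sup' Finset.nonempty_range_add_one
      (fun i => 1 / Cl ((a:ℝ)+ν+i)) with hρ
  have hTnn : ∀ j, 0 ≤ T j := fun j => Finset.sum_nonneg (fun i _ => sq_nonneg _)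
  have hBnn : 0 ≤ Bl := Finset.sum_nonneg fun i hi =>
    mul_nonneg (hC i (by have := Finset.mem_range.mp hi; omega)).le (sq_nonneg _)
  have hρnn : 0 ≤ ρ := by
    have h0 : (0:ℕ) ∈ Finset.range (b-(a+m)+1) := Finset.mem_range.mpr (by omega)
    refine le_trans ?_ (Finset.le_sup' (fun i : ℕ => 1 / Cl ((a:ℝ)+ν+i)) h0)
    exact le_of_lt (one_div_pos.mpr (hC 0 (Nat.zero_le _)))
  have hcapbd : ∀ j ∈ Finset.Icc (a+mK) b,
      ∑ i ∈ Finset.range (j-(a+m)+1), cap i ^ 2 ≤ ρ * Bl := by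
    intro j hj
    obtain ⟨hj1, hj2⟩ := Finset.mem_Icc.mp hj
    calc ∑ i ∈ Finset.range (j-(a+m)+1), cap i ^ 2
        ≤ ∑ i ∈ Finset.range (b-(a+m)+1), cap i ^ 2 := by
          apply Finset.sum_le_sum_of_subset_of_nonneg
            (Finset.range_subset_range.mpr (by omega))
          intro i _ _; exact sq_nonneg _
      _ ≤ ∑ i ∈ Finset.range (b-(a+m)+1), ρ * (Cl ((a:ℝ)+ν+i) * cap i ^ 2) := by
          apply Finset.sum_le_sum
          intro i hi
          have hi' : i ≤ b-(a+m) := by have := Finset.mem_range.mp hi; omega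
          have hCi : 0 < Cl ((a:ℝ)+ν+i) := hC i hi'
          calc cap i ^ 2 = (1 / Cl ((a:ℝ)+ν+i)) * (Cl ((a:ℝ)+ν+i) * cap i ^ 2) := by
                field_simp
            _ ≤ ρ * (Cl ((a:ℝ)+ν+i) * cap i ^ 2) :=
                mul_le_mul_of_nonneg_right
                  (Finset.le_sup' (fun i : ℕ => 1 / Cl ((a:ℝ)+ν+i)) hi)
                  (by positivity)
      _ = ρ * Bl := by rw [← Finset.mul_sum]
  have hpoint : ∀ j ∈ Finset.Icc (a+mK) b,
      |f (j:ℝ)| ≤ (1/Real.Gamma μ) * Real.sqrt (T j) * Real.sqrt (ρ * Bl) := by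
    intro j hj
    obtain ⟨hj1, hj2⟩ := Finset.mem_Icc.mp hj
    have hrep := repr_lemma_s16 μ m hmdef hμ hcm a f
      (fun τ hτ => hz τ (lt_of_lt_of_le hτ hml)) j (le_trans (by omega) hj1)
    rw [← hrep, abs_mul, abs_of_nonneg (by positivity : (0:ℝ) ≤ 1 / Real.Gamma μ)]
    have hCS := Finset.sum_mul_sq_le_sq_mul_sq (Finset.range (j-(a+m)+1))
      (fun i => gff ((j:ℝ) - ((a:ℝ) + ν + i) - 1) (μ - 1)) (fun i => cap i)
    have h1 : |∑ i ∈ Finset.range (j-(a+m)+1),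
        gff ((j:ℝ) - ((a:ℝ) + ν + i) - 1) (μ - 1) * cap i|
        ≤ Real.sqrt (T j) * Real.sqrt (∑ i ∈ Finset.range (j-(a+m)+1), cap i ^ 2) := by
      rw [← Real.sqrt_sq_eq_abs, ← Real.sqrt_mul (hTnn j)]
      exact Real.sqrt_le_sqrt hCS
    have h2 : Real.sqrt (∑ i ∈ Finset.range (j-(a+m)+1), cap i ^ 2)
        ≤ Real.sqrt (ρ * Bl) := Real.sqrt_le_sqrt (hcapbd j hj)
    calc (1/Real.Gamma μ) * |∑ i ∈ Finset.range (j-(a+m)+1),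
          gff ((j:ℝ) - ((a:ℝ) + ν + i) - 1) (μ - 1) * cap i|
        ≤ (1/Real.Gamma μ) * (Real.sqrt (T j) *
            Real.sqrt (∑ i ∈ Finset.range (j-(a+m)+1), cap i ^ 2)) := by
          apply mul_le_mul_of_nonneg_left h1 (by positivity)
      _ ≤ (1/Real.Gamma μ) * (Real.sqrt (T j) * Real.sqrt (ρ * Bl)) := by
          apply mul_le_mul_of_nonneg_left
            (mul_le_mul_of_nonneg_left h2 (Real.sqrt_nonneg _)) (by positivity)
      _ = (1/Real.Gamma μ) * Real.sqrt (T j) * Real.sqrt (ρ * Bl) := by ring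
  set K : ℝ := Real.sqrt (ρ * Bl) with hK
  have hKnn : 0 ≤ K := Real.sqrt_nonneg _
  have hS1 : ∑ j ∈ Finset.Icc (a+mK) b, |f (j:ℝ)|^r
      ≤ (∑ j ∈ Finset.Icc (a+m) b, ((1/Real.Gamma μ) * Real.sqrt (T j))^r) * K^r := by
    calc ∑ j ∈ Finset.Icc (a+mK) b, |f (j:ℝ)|^r
        ≤ ∑ j ∈ Finset.Icc (a+mK) b, ((1/Real.Gamma μ) * Real.sqrt (T j))^r * K^r := by
          apply Finset.sum_le_sum
          intro j hj
          rw [← Real.mul_rpow (by positivity) hKnn]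
          exact Real.rpow_le_rpow (abs_nonneg _) (hpoint j hj) hr0.le
      _ ≤ ∑ j ∈ Finset.Icc (a+m) b, ((1/Real.Gamma μ) * Real.sqrt (T j))^r * K^r := by
          apply Finset.sum_le_sum_of_subset_of_nonneg
            (Finset.Icc_subset_Icc (by omega) le_rfl)
          intro j _ _
          exact mul_nonneg (Real.rpow_nonneg (by positivity) r) (Real.rpow_nonneg hKnn r)
      _ = _ := by rw [← Finset.sum_mul]
  have hSnn : 0 ≤ ∑ j ∈ Finset.Icc (a+mK) b, |f (j:ℝ)|^r :=
    Finset.sum_nonneg fun j _ => Real.rpow_nonneg (abs_nonneg _) r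
  have chain := Real.rpow_le_rpow hSnn hS1 (by positivity : (0:ℝ) ≤ 2/r)
  refine chain.trans_eq ?_
  have hsum_nn : 0 ≤ ∑ j ∈ Finset.Icc (a+m) b, ((1/Real.Gamma μ) * Real.sqrt (T j))^r :=
    Finset.sum_nonneg fun j _ => Real.rpow_nonneg (by positivity) r
  rw [Real.mul_rpow hsum_nn (Real.rpow_nonneg hKnn r)]
  congr 1
  · have e1 : ∀ j ∈ Finset.Icc (a+m) b,
        ((1/Real.Gamma μ) * Real.sqrt (T j))^r = (1/Real.Gamma μ)^r * (T j)^(r/2) := by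
      intro j _
      rw [Real.mul_rpow (by positivity) (Real.sqrt_nonneg _), Real.sqrt_eq_rpow,
        ← Real.rpow_mul (hTnn j), show 1/2*r = r/2 by ring]
    rw [Finset.sum_congr rfl e1, ← Finset.mul_sum,
      Real.mul_rpow (Real.rpow_nonneg (by positivity) r)
        (Finset.sum_nonneg fun j _ => Real.rpow_nonneg (hTnn j) _),
      ← Real.rpow_mul (by positivity : (0:ℝ) ≤ 1/Real.Gamma μ),
      show r * (2/r) = 2 by field_simp,
      show (2:ℝ) = ((2:ℕ):ℝ) by norm_num,
      Real.rpow_natCast, one_div_pow]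
  · rw [← Real.rpow_mul hKnn, show r * (2/r) = 2 by field_simp,
      show (2:ℝ) = ((2:ℕ):ℝ) by norm_num, Real.rpow_natCast]
    rw [hK]
    exact Real.sq_sqrt (mul_nonneg hρnn hBnn)

theorem stmt16 (k : ℕ) (hk : 0 < k) (μ : ℕ → ℝ) (hμ0 : 0 < μ 0)
    (hmono : ∀ l₁ l₂, l₁ < l₂ → l₂ < k → μ l₁ < μ l₂)
    (hni : ∀ l < k, ∀ n : ℤ, μ l ≠ n) (f : ℝ → ℝ) (a b : ℕ)
    (hb : a + ⌈μ (k - 1)⌉₊ < b)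
    (hz : ∀ τ < ⌈μ (k - 1)⌉₊, fdiff^[τ] f a = 0)
    (r : ℝ) (hr : 1 ≤ r) (C : ℕ → ℝ → ℝ)
    (hC : ∀ l < k, ∀ i ≤ b - (a + ⌈μ l⌉₊),
      0 < C l (a + ((⌈μ l⌉₊ : ℝ) - μ l) + i)) :
    (∑ j ∈ Finset.Icc (a + ⌈μ (k - 1)⌉₊) b, |f (j : ℝ)| ^ r) ^ (1 / r) ≤
      Real.sqrt
        (((Finset.range k).sup' (Finset.nonempty_range_iff.mpr hk.ne')
            (fun l =>
              (1 / Real.Gamma (μ l) ^ 2) *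
                (∑ j ∈ Finset.Icc (a + ⌈μ l⌉₊) b,
                    (∑ i ∈ Finset.range (j - (a + ⌈μ l⌉₊) + 1),
                        gff ((j : ℝ) - (a + ((⌈μ l⌉₊ : ℝ) - μ l) + i) - 1)
                            (μ l - 1) ^ 2) ^ (r / 2)) ^ (2 / r))) *
          ((Finset.range k).sup' (Finset.nonempty_range_iff.mpr hk.ne')
            (fun l =>
              (Finset.range (b - (a + ⌈μ l⌉₊) + 1)).sup'
                (Finset.nonempty_range_iff.mpr (Nat.succ_ne_zero _))
                (fun i => 1 / C l (a + ((⌈μ l⌉₊ : ℝ) - μ l) + i))))) *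
        ((∑ l ∈ Finset.range k,
            ∑ i ∈ Finset.range (b - (a + ⌈μ l⌉₊) + 1),
              C l (a + ((⌈μ l⌉₊ : ℝ) - μ l) + i) *
                caputo (μ l) a f (a + ((⌈μ l⌉₊ : ℝ) - μ l) + i) ^ 2) / k) ^
          ((1 : ℝ) / 2) := by
  have hr0 : (0:ℝ) < r := lt_of_lt_of_le one_pos hr
  have hμl : ∀ l < k, 0 < μ l := by
    intro l hl
    rcases Nat.eq_zero_or_pos l with h|h
    · subst h; exact hμ0
    · exact hμ0.trans (hmono 0 l h hl)
  have hμle : ∀ l < k, μ l ≤ μ (k-1) := by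
    intro l hl
    rcases eq_or_lt_of_le (show l ≤ k-1 by omega) with h|h
    · rw [h]
    · exact (hmono l (k-1) h (by omega)).le
  have hmlK : ∀ l < k, ⌈μ l⌉₊ ≤ ⌈μ (k-1)⌉₊ := fun l hl => Nat.ceil_mono (hμle l hl)
  have hcml : ∀ l < k, μ l < (⌈μ l⌉₊ : ℝ) := by
    intro l hl
    refine lt_of_le_of_ne (Nat.le_ceil _) ?_
    have := hni l hl (⌈μ l⌉₊ : ℤ)
    exact_mod_cast this
  set S : ℝ := ∑ j ∈ Finset.Icc (a + ⌈μ (k-1)⌉₊) b, |f (j:ℝ)| ^ r with hSdef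
  set D : ℝ := (Finset.range k).sup' (Finset.nonempty_range_iff.mpr hk.ne')
      (fun l =>
        (1 / Real.Gamma (μ l) ^ 2) *
          (∑ j ∈ Finset.Icc (a + ⌈μ l⌉₊) b,
              (∑ i ∈ Finset.range (j - (a + ⌈μ l⌉₊) + 1),
                  gff ((j : ℝ) - (a + ((⌈μ l⌉₊ : ℝ) - μ l) + i) - 1)
                      (μ l - 1) ^ 2) ^ (r / 2)) ^ (2 / r)) with hD
  set R : ℝ := (Finset.range k).sup' (Finset.nonempty_range_iff.mpr hk.ne')
      (fun l =>
        (Finset.range (b - (a + ⌈μ l⌉₊) + 1)).sup' Finset.nonempty_range_add_one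
          (fun i => 1 / C l (a + ((⌈μ l⌉₊ : ℝ) - μ l) + i))) with hR
  set Bf : ℕ → ℝ := fun l =>
      ∑ i ∈ Finset.range (b - (a + ⌈μ l⌉₊) + 1),
        C l (a + ((⌈μ l⌉₊ : ℝ) - μ l) + i) *
          caputo (μ l) a f (a + ((⌈μ l⌉₊ : ℝ) - μ l) + i) ^ 2 with hBf
  have hSnn : 0 ≤ S := Finset.sum_nonneg fun j _ => Real.rpow_nonneg (abs_nonneg _) r
  have hBnn : ∀ l < k, 0 ≤ Bf l := by
    intro l hl
    apply Finset.sum_nonneg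
    intro i hi
    exact mul_nonneg (hC l hl i (by have := Finset.mem_range.mp hi; omega)).le (sq_nonneg _)
  have hρl : ∀ l < k, (0:ℝ) ≤ (Finset.range (b - (a + ⌈μ l⌉₊) + 1)).sup'
      Finset.nonempty_range_add_one (fun i => 1 / C l (a + ((⌈μ l⌉₊ : ℝ) - μ l) + i)) := by
    intro l hl
    have h0 : (0:ℕ) ∈ Finset.range (b - (a + ⌈μ l⌉₊) + 1) := Finset.mem_range.mpr (by omega)
    refine le_trans ?_ (Finset.le_sup'
      (fun i : ℕ => 1 / C l ((a:ℝ) + ((⌈μ l⌉₊ : ℝ) - μ l) + i)) h0)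
    exact le_of_lt (one_div_pos.mpr (hC l hl 0 (Nat.zero_le _)))
  have hδl : ∀ l < k, (0:ℝ) ≤ (1 / Real.Gamma (μ l) ^ 2) *
      (∑ j ∈ Finset.Icc (a + ⌈μ l⌉₊) b,
          (∑ i ∈ Finset.range (j - (a + ⌈μ l⌉₊) + 1),
              gff ((j : ℝ) - (a + ((⌈μ l⌉₊ : ℝ) - μ l) + i) - 1)
                  (μ l - 1) ^ 2) ^ (r / 2)) ^ (2 / r) := by
    intro l hl
    have hΓ := Real.Gamma_pos_of_pos (hμl l hl)
    have : (0:ℝ) ≤ ∑ j ∈ Finset.Icc (a + ⌈μ l⌉₊) b,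
        (∑ i ∈ Finset.range (j - (a + ⌈μ l⌉₊) + 1),
            gff ((j : ℝ) - (a + ((⌈μ l⌉₊ : ℝ) - μ l) + i) - 1)
                (μ l - 1) ^ 2) ^ (r / 2) :=
      Finset.sum_nonneg fun j _ => Real.rpow_nonneg
        (Finset.sum_nonneg fun i _ => sq_nonneg _) _
    positivity
  have hDnn : 0 ≤ D := by
    rw [hD, Finset.le_sup'_iff]
    exact ⟨0, Finset.mem_range.mpr hk, hδl 0 hk⟩
  have hRnn : 0 ≤ R := by
    rw [hR, Finset.le_sup'_iff]
    exact ⟨0, Finset.mem_range.mpr hk, hρl 0 hk⟩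
  have key : ∀ l < k, S ^ (2/r) ≤ (D * R) * Bf l := by
    intro l hl
    have h1 := per_l (μ l) ⌈μ l⌉₊ rfl (hμl l hl) (hcml l hl) a b ⌈μ (k-1)⌉₊
      (hmlK l hl) f hz r hr (C l) (fun i hi => hC l hl i hi)
    refine h1.trans ?_
    have hδ := Finset.le_sup' (f := fun l =>
        (1 / Real.Gamma (μ l) ^ 2) *
          (∑ j ∈ Finset.Icc (a + ⌈μ l⌉₊) b,
              (∑ i ∈ Finset.range (j - (a + ⌈μ l⌉₊) + 1),
                  gff ((j : ℝ) - (a + ((⌈μ l⌉₊ : ℝ) - μ l) + i) - 1)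
                      (μ l - 1) ^ 2) ^ (r / 2)) ^ (2 / r)) (Finset.mem_range.mpr hl)
    have hρ := Finset.le_sup' (f := fun l =>
        (Finset.range (b - (a + ⌈μ l⌉₊) + 1)).sup' Finset.nonempty_range_add_one
          (fun i => 1 / C l (a + ((⌈μ l⌉₊ : ℝ) - μ l) + i))) (Finset.mem_range.mpr hl)
    calc _ ≤ D * ((Finset.range (b - (a + ⌈μ l⌉₊) + 1)).sup' Finset.nonempty_range_add_one
            (fun i => 1 / C l (a + ((⌈μ l⌉₊ : ℝ) - μ l) + i)) * Bf l) := by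
          apply mul_le_mul_of_nonneg_right hδ
          exact mul_nonneg (hρl l hl) (hBnn l hl)
      _ ≤ D * (R * Bf l) := by
          apply mul_le_mul_of_nonneg_left
            (mul_le_mul_of_nonneg_right hρ (hBnn l hl)) hDnn
      _ = (D * R) * Bf l := by ring
  have hsum : (k:ℝ) * S ^ (2/r) ≤ (D * R) * ∑ l ∈ Finset.range k, Bf l := by
    calc (k:ℝ) * S ^ (2/r) = ∑ _l ∈ Finset.range k, S ^ (2/r) := by
          rw [Finset.sum_const, Finset.card_range, nsmul_eq_mul]
      _ ≤ ∑ l ∈ Finset.range k, (D * R) * Bf l := by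
          apply Finset.sum_le_sum
          intro l hl
          exact key l (Finset.mem_range.mp hl)
      _ = (D * R) * ∑ l ∈ Finset.range k, Bf l := by rw [Finset.mul_sum]
  have hkpos : (0:ℝ) < k := by exact_mod_cast hk
  have hfin : S ^ (2/r) ≤ (D * R) * ((∑ l ∈ Finset.range k, Bf l) / k) := by
    rw [mul_div_assoc'] at *
    rw [le_div_iff₀ hkpos]
    calc S ^ (2/r) * k = k * S ^ (2/r) := by ring
      _ ≤ _ := hsum
  have hBsnn : 0 ≤ ∑ l ∈ Finset.range k, Bf l :=
    Finset.sum_nonneg fun l hl => hBnn l (Finset.mem_range.mp hl)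
  have hXnn : 0 ≤ (D * R) * ((∑ l ∈ Finset.range k, Bf l) / k) := by positivity
  have hL : 0 ≤ S ^ (1/r) := Real.rpow_nonneg hSnn _
  have hsq : (S ^ (1/r)) ^ (2:ℕ) = S ^ (2/r) := by
    rw [← Real.rpow_natCast (S ^ (1/r)) 2, ← Real.rpow_mul hSnn]
    congr 1
    push_cast
    field_simp
  have step : S ^ (1/r) ≤ Real.sqrt ((D * R) * ((∑ l ∈ Finset.range k, Bf l) / k)) := by
    rw [Real.le_sqrt hL hXnn]
    rw [hsq]
    exact hfin
  refine step.trans_eq ?_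
  rw [Real.sqrt_mul (mul_nonneg hDnn hRnn)]
  congr 1
  exact Real.sqrt_eq_rpow _
end
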